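/- arXiv:1308.0527 — 4 statements merged into one kernel-verified Lean document; each statement's English description precedes it below -/
import Mathlib

section
/- Let U : H → H be unitary and Σ((φ₁,φ₂),(ψ₁,ψ₂)) = ⟨φ₁,ψ₂⟩ − ⟨φ₂,ψ₁⟩ on H × H. Then the subspace W = { ((I+U)φ, −i(I−U)φ) : φ ∈ H } is maximally Σ-isotropic, i.e. W equals its Σ-orthogonal complement. -/
/-- For a unitary `U : H → H`, the subspace `W = {((I+U)φ, −i(I−U)φ) : φ ∈ H}` is
maximally isotropic for `Σ((φ₁,φ₂),(ψ₁,ψ₂)) = ⟪φ₁,ψ₂⟫ − ⟪φ₂,ψ₁⟫`: it equals its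
`Σ`-orthogonal complement. -/
theorem cayley_parametrized_subspace_maximally_isotropic {H : Type*} [NormedAddCommGroup H]
    [InnerProductSpace ℂ H] [CompleteSpace H] (U : H ≃ₗᵢ[ℂ] H) :
    {p : H × H | ∃ φ : H, p = (φ + U φ, -Complex.I • (φ - U φ))}
      = {x : H × H | ∀ y ∈ {p : H × H | ∃ φ : H, p = (φ + U φ, -Complex.I • (φ - U φ))},
          (inner ℂ x.1 y.2 : ℂ) - inner ℂ x.2 y.1 = 0} := by
  ext x
  simp only [Set.mem_setOf_eq]
  constructor
  · rintro ⟨φ, rfl⟩ y ⟨ψ, rfl⟩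
    simp only [inner_add_left, inner_sub_left, inner_add_right, inner_sub_right,
      inner_neg_left, inner_neg_right, inner_smul_left, inner_smul_right,
      LinearIsometryEquiv.inner_map_map, map_neg, Complex.conj_I, neg_smul]
    ring
  · intro h
    have key : U (Complex.I • x.1 - x.2) = Complex.I • x.1 + x.2 := by
      apply ext_inner_right ℂ
      intro v
      obtain ⟨ψ, rfl⟩ : ∃ ψ, v = U ψ := ⟨U.symm v, (U.apply_symm_apply v).symm⟩
      have hv := h (ψ + U ψ, -Complex.I • (ψ - U ψ)) ⟨ψ, rfl⟩
      rw [LinearIsometryEquiv.inner_map_map]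
      simp only [inner_add_left, inner_sub_left, inner_add_right, inner_sub_right,
        inner_neg_left, inner_neg_right, inner_smul_left, inner_smul_right,
        map_neg, Complex.conj_I, neg_smul] at hv ⊢
      linear_combination hv
    refine ⟨(-Complex.I / 2) • (Complex.I • x.1 - x.2), ?_⟩
    rw [map_smul, key]
    refine Prod.ext ?_ ?_ <;> match_scalars <;> ring_nf <;>
      simp [Complex.I_sq]
end

section
/- Let U : H → H be unitary. Then the operator M on H × H given in block form by M(φ₁,φ₂) = ((I−U)φ₁ − i(I+U)φ₂, (I+U*)φ₁ + i(I−U*)φ₂) is, after division by 2, a unitary operator on H × H; in particular M(φ₁,φ₂) = 0 implies (φ₁,φ₂) = (0,0). -/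
/-- For a unitary `U : H → H`, the block operator
`M(φ₁,φ₂) = ((I−U)φ₁ − i(I+U)φ₂, (I+U*)φ₁ + i(I−U*)φ₂)` is, after division by `2`,
a unitary operator on `H × H` (linear, bijective, and `⟪Mx, My⟫ = 4⟪x,y⟫` for the
direct-sum inner product); in particular `M(φ₁,φ₂) = 0` implies `(φ₁,φ₂) = 0`. -/
theorem block_operator_M_unitary {H : Type*} [NormedAddCommGroup H]
    [InnerProductSpace ℂ H] [CompleteSpace H]
    (U : H →L[ℂ] H) (hU : U ∈ unitary (H →L[ℂ] H))
    (M : H × H → H × H)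
    (hM : M = fun x =>
      ((x.1 - U x.1) - Complex.I • (x.2 + U x.2),
       (x.1 + ContinuousLinearMap.adjoint U x.1)
         + Complex.I • (x.2 - ContinuousLinearMap.adjoint U x.2))) :
    IsLinearMap ℂ M ∧ Function.Bijective M ∧
      (∀ x y : H × H,
        (inner ℂ (M x).1 (M y).1 : ℂ) + inner ℂ (M x).2 (M y).2
          = 4 * ((inner ℂ x.1 y.1 : ℂ) + inner ℂ x.2 y.2)) ∧
      (∀ x : H × H, M x = 0 → x = 0) := by
  have hstar : star U = ContinuousLinearMap.adjoint U := ContinuousLinearMap.star_eq_adjoint U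
  have h1 : ∀ a : H, ContinuousLinearMap.adjoint U (U a) = a := by
    intro a
    have h := hU.1
    rw [hstar] at h
    have := congrArg (fun T : H →L[ℂ] H => T a) h
    simpa using this
  have h2 : ∀ a : H, U (ContinuousLinearMap.adjoint U a) = a := by
    intro a
    have h := hU.2
    rw [hstar] at h
    have := congrArg (fun T : H →L[ℂ] H => T a) h
    simpa using this
  have hUU : ∀ a b : H, (inner ℂ (U a) (U b) : ℂ) = inner ℂ a b := by
    intro a b
    rw [← ContinuousLinearMap.adjoint_inner_left, h1]
  have hlin : IsLinearMap ℂ M := by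
    subst hM
    constructor
    · intro x y
      refine Prod.ext ?_ ?_ <;> simp only [map_add, Prod.fst_add, Prod.snd_add] <;> module
    · intro c x
      refine Prod.ext ?_ ?_ <;>
        simp only [map_smul, Prod.smul_fst, Prod.smul_snd] <;> module
  have hinner : ∀ x y : H × H,
      (inner ℂ (M x).1 (M y).1 : ℂ) + inner ℂ (M x).2 (M y).2
        = 4 * ((inner ℂ x.1 y.1 : ℂ) + inner ℂ x.2 y.2) := by
    intro x y
    subst hM
    simp only [inner_sub_left, inner_sub_right, inner_add_left, inner_add_right,
      inner_smul_left, inner_smul_right, map_add, map_sub, map_smul, ContinuousLinearMap.adjoint_inner_left,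
      ContinuousLinearMap.adjoint_inner_right, h1, h2, hUU, Complex.conj_I]
    ring_nf
    simp only [Complex.I_sq]
    ring
  have hker : ∀ x : H × H, M x = 0 → x = 0 := by
    intro x hx
    have h := hinner x x
    rw [hx] at h
    simp only [Prod.fst_zero, Prod.snd_zero, inner_zero_left, add_zero] at h
    have h4 : (inner ℂ x.1 x.1 : ℂ) + inner ℂ x.2 x.2 = 0 := by
      have h40 : (4 : ℂ) ≠ 0 := by norm_num
      field_simp at h
      exact (mul_eq_zero.mp h.symm).resolve_left h40
    rw [inner_self_eq_norm_sq_to_K, inner_self_eq_norm_sq_to_K] at h4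
    have hR : ‖x.1‖ ^ 2 + ‖x.2‖ ^ 2 = 0 := by
      exact Complex.ofReal_eq_zero.mp (by push_cast; exact h4)
    have h5 : ‖x.1‖ = 0 ∧ ‖x.2‖ = 0 := by
      constructor <;> nlinarith [sq_nonneg ‖x.1‖, sq_nonneg ‖x.2‖]
    exact Prod.ext (norm_eq_zero.mp h5.1) (norm_eq_zero.mp h5.2)
  refine ⟨hlin, ⟨?_, ?_⟩, hinner, hker⟩
  · intro x y hxy
    have hsub : M (x - y) = 0 := by
      have : M (x - y) = M x - M y := by
        rw [sub_eq_add_neg, hlin.map_add, ← neg_one_smul ℂ y, hlin.map_smul]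
        simp [sub_eq_add_neg]
      rw [this, hxy, sub_self]
    have := hker _ hsub
    exact sub_eq_zero.mp this
  · intro y
    refine ⟨(4:ℂ)⁻¹ • ((y.1 - ContinuousLinearMap.adjoint U y.1) + (y.2 + U y.2),
      Complex.I • (y.1 + ContinuousLinearMap.adjoint U y.1)
        - Complex.I • (y.2 - U y.2)), ?_⟩
    rw [hlin.map_smul, hM]
    simp only [map_add, map_sub, map_smul, h1, h2]
    refine Prod.ext ?_ ?_ <;> simp only [Prod.smul_fst, Prod.smul_snd] <;>
      match_scalars <;> (ring_nf; try norm_num [Complex.I_sq])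
end

section
/- For c > 0, the function f(μ) = e^{−4πμ} − (μ − c)/(μ + c) has exactly one zero in (0, ∞), i.e. the equation e^{−4πμ} = (μ − c)/(μ + c) has exactly one solution μ > 0; for c < 0 it has no solution μ > 0, and for c = 0 the only solution is μ = 0. -/
/-- The equation `e^{−4πμ} = (μ − c)/(μ + c)` determining the negative eigenvalues of
the Robin Laplacian: for `c > 0` it has exactly one solution `μ > 0`; for `c < 0` it
has no solution `μ > 0`; and for `c = 0` the only solution `μ ≥ 0` is `μ = 0`
(stated via the equivalent form `e^{−4πμ}(μ + c) = μ − c`). -/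
theorem robin_negative_eigenvalue_equation (c : ℝ) :
    (0 < c → ∃! μ : ℝ, 0 < μ ∧
        Real.exp (-(4 * Real.pi * μ)) = (μ - c) / (μ + c)) ∧
    (c < 0 → ∀ μ : ℝ, 0 < μ →
        Real.exp (-(4 * Real.pi * μ)) ≠ (μ - c) / (μ + c)) ∧
    (c = 0 → ∀ μ : ℝ, 0 ≤ μ →
        (Real.exp (-(4 * Real.pi * μ)) * (μ + c) = μ - c ↔ μ = 0)) := by
  have hpi : (1:ℝ) ≤ 4 * Real.pi := by nlinarith [Real.pi_gt_three]
  refine ⟨?_, ?_, ?_⟩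
  · -- c > 0 : exactly one solution
    intro hc
    set F : ℝ → ℝ := fun μ => Real.exp (-(4 * Real.pi * μ)) * (μ + c) - (μ - c) with hF
    have hderiv : ∀ μ : ℝ, HasDerivAt F
        ((-(4 * Real.pi)) * Real.exp (-(4 * Real.pi * μ)) * (μ + c)
          + Real.exp (-(4 * Real.pi * μ)) - 1) μ := by
      intro μ
      have h1 : HasDerivAt (fun μ : ℝ => -(4 * Real.pi * μ)) (-(4 * Real.pi)) μ := by
        have := ((hasDerivAt_id μ).const_mul (4 * Real.pi)).neg
        rw [mul_one] at this
        exact this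
      have h2 := (h1.exp.mul ((hasDerivAt_id μ).add_const c)).sub
        ((hasDerivAt_id μ).sub_const c)
      refine h2.congr_deriv ?_
      simp only [id_eq]
      ring
    have hcont : Continuous F := by
      apply Continuous.sub
      · exact (Real.continuous_exp.comp (by continuity)).mul (by continuity)
      · continuity
    have hanti : StrictAntiOn F (Set.Ici 0) := by
      apply strictAntiOn_of_deriv_neg (convex_Ici 0) hcont.continuousOn
      intro μ hμ
      rw [interior_Ici] at hμ
      have hμ0 : (0:ℝ) < μ := hμ
      rw [(hderiv μ).deriv]
      have he : Real.exp (-(4 * Real.pi * μ)) < 1 := by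
        rw [Real.exp_lt_one_iff]
        nlinarith [Real.pi_pos]
      have hprod : 0 < 4 * Real.pi * Real.exp (-(4 * Real.pi * μ)) * (μ + c) := by
        have : 0 < μ + c := by linarith
        positivity
      nlinarith
    -- equation equivalent to F = 0 for μ > 0
    have heqv : ∀ μ : ℝ, 0 < μ →
        (Real.exp (-(4 * Real.pi * μ)) = (μ - c) / (μ + c) ↔ F μ = 0) := by
      intro μ hμ
      have hμc : (0:ℝ) < μ + c := by linarith
      rw [hF]
      constructor
      · intro h
        simp only
        rw [h]
        field_simp
        ring
      · intro h
        simp only at h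
        have : Real.exp (-(4 * Real.pi * μ)) * (μ + c) = μ - c := by linarith
        rw [← this]
        field_simp
    -- find M with F M < 0
    set M : ℝ := 2 * c + 2 with hM
    have hM0 : (0:ℝ) < M := by linarith
    have hFM : F M < 0 := by
      have hexp : Real.exp (-(4 * Real.pi * M)) ≤ 1 / (M + 1) := by
        have h1 : 4 * Real.pi * M + 1 ≤ Real.exp (4 * Real.pi * M) := by
          linarith [Real.add_one_le_exp (4 * Real.pi * M)]
        have h2 : M + 1 ≤ Real.exp (4 * Real.pi * M) := by nlinarith
        rw [Real.exp_neg, inv_eq_one_div]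
        exact one_div_le_one_div_of_le (by linarith) h2
      have hbound : Real.exp (-(4 * Real.pi * M)) * (M + c) ≤ (M + c) / (M + 1) := by
        rw [div_eq_mul_inv, mul_comm (M + c)]
        apply mul_le_mul_of_nonneg_right _ (by linarith)
        rw [one_div] at hexp
        exact hexp
      have h3 : (M + c) / (M + 1) ≤ 1 + c := by
        rw [div_le_iff₀ (by linarith)]
        nlinarith
      have h4 : Real.exp (-(4 * Real.pi * M)) * (M + c) ≤ 1 + c := le_trans hbound h3
      show Real.exp (-(4 * Real.pi * M)) * (M + c) - (M - c) < 0
      rw [hM] at h4 ⊢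
      linarith
    have hF0 : F 0 = 2 * c := by
      show Real.exp (-(4 * Real.pi * 0)) * (0 + c) - (0 - c) = 2 * c
      simp
      ring
    -- IVT
    have hsub : Set.Icc (F M) (F 0) ⊆ F '' Set.Icc 0 M :=
      intermediate_value_Icc' (le_of_lt hM0) hcont.continuousOn
    obtain ⟨μ₀, hμ₀mem, hμ₀⟩ := hsub ⟨le_of_lt hFM, by rw [hF0]; linarith⟩
    have hμ₀pos : 0 < μ₀ := by
      rcases lt_or_eq_of_le hμ₀mem.1 with h | h
      · exact h
      · exfalso; rw [← h] at hμ₀; rw [hF0] at hμ₀; linarith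
    refine ⟨μ₀, ⟨hμ₀pos, (heqv μ₀ hμ₀pos).2 hμ₀⟩, ?_⟩
    rintro ν ⟨hνpos, hνeq⟩
    have hν0 : F ν = 0 := (heqv ν hνpos).1 hνeq
    exact hanti.injOn (le_of_lt hνpos) (le_of_lt hμ₀pos) (by rw [hν0, hμ₀])
  · -- c < 0 : no solutions
    intro hc μ hμ heq
    have hexp0 : 0 < Real.exp (-(4 * Real.pi * μ)) := Real.exp_pos _
    have hexp1 : Real.exp (-(4 * Real.pi * μ)) < 1 := by
      rw [Real.exp_lt_one_iff]
      nlinarith [Real.pi_pos]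
    rcases le_or_gt (μ + c) 0 with h | h
    · rcases eq_or_lt_of_le h with h0 | h0
      · rw [h0, div_zero] at heq
        linarith
      · have : (μ - c) / (μ + c) < 0 := div_neg_of_pos_of_neg (by linarith) h0
        linarith
    · have : 1 < (μ - c) / (μ + c) := by
        rw [lt_div_iff₀ h]
        linarith
      linarith
  · -- c = 0
    intro hc μ hμ
    subst hc
    simp only [add_zero, sub_zero]
    constructor
    · intro h
      by_contra hne
      have hμ0 : 0 < μ := lt_of_le_of_ne hμ (Ne.symm hne)
      have hexp1 : Real.exp (-(4 * Real.pi * μ)) < 1 := by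
        rw [Real.exp_lt_one_iff]
        nlinarith [Real.pi_pos]
      nlinarith
    · intro h; simp [h]
end

section
/- Let R be an essentially self-adjoint operator on a dense domain D(R) ⊆ H₁, let {Γᵢ} be an orthonormal basis of a Hilbert space H₂, and let A = R ⊗ I on the domain of finite sums Σᵢ Φᵢ ⊗ Γᵢ with Φᵢ ∈ D(R). Then A is essentially self-adjoint on H₁ ⊗ H₂, i.e. ker(A† − i) = ker(A† + i) = {0}. -/
open scoped ComplexConjugate

private lemma dense_span_zero' {E : Type*} [NormedAddCommGroup E]
    [NormedSpace ℂ E] (f : E →L[ℂ] ℂ) (S : Set E)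
    (h : (Submodule.span ℂ S).topologicalClosure = ⊤)
    (hf : ∀ x ∈ S, f x = 0) : ∀ x, f x = 0 := by
  intro x
  have hker : (Submodule.span ℂ S).topologicalClosure ≤ LinearMap.ker (f : E →ₗ[ℂ] ℂ) := by
    apply Submodule.topologicalClosure_minimal
    · exact Submodule.span_le.2 hf
    · exact ContinuousLinearMap.isClosed_ker f
  rw [h] at hker
  exact hker (Submodule.mem_top)

/-- Essential self-adjointness of `A = R ⊗ I` on the Hilbert tensor product
`H = H₁ ⊗ H₂`: the tensor product is encoded by a bilinear map `t : H₁ → H₂ → H` with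
`⟪t a b, t c d⟫ = ⟪a,c⟫⟪b,d⟫` and total range, `{Γᵢ}` is an orthonormal basis of `H₂`,
and `R` is a symmetric, essentially self-adjoint operator on the dense domain
`D(R) ⊆ H₁` (trivial deficiency spaces `ker(R† ∓ i) = {0}`). Then the deficiency
spaces of `A`, acting by `A(φ ⊗ Γᵢ) = (Rφ) ⊗ Γᵢ` on finite sums, are trivial:
any `Ψ ∈ H` orthogonal to `(A ± i)x` for every `x` in the domain vanishes. -/
theorem tensor_with_identity_essentially_selfAdjoint {H1 H2 H : Type*}
    [NormedAddCommGroup H1] [InnerProductSpace ℂ H1] [CompleteSpace H1]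
    [NormedAddCommGroup H2] [InnerProductSpace ℂ H2] [CompleteSpace H2]
    [NormedAddCommGroup H] [InnerProductSpace ℂ H] [CompleteSpace H]
    {ι : Type*} (t : H1 →ₗ[ℂ] H2 →ₗ[ℂ] H)
    (ht : ∀ (a c : H1) (b d : H2),
      (inner ℂ (t a b) (t c d) : ℂ) = (inner ℂ a c : ℂ) * (inner ℂ b d : ℂ))
    (htdense : (Submodule.span ℂ {x : H | ∃ a b, x = t a b}).topologicalClosure = ⊤)
    (Γ : ι → H2) (hΓ : Orthonormal ℂ Γ)
    (hΓbasis : (Submodule.span ℂ (Set.range Γ)).topologicalClosure = ⊤)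
    (D : Submodule ℂ H1) (hD : D.topologicalClosure = ⊤)
    (R : D →ₗ[ℂ] H1)
    (hsym : ∀ ψ χ : D, (inner ℂ ((ψ : H1)) (R χ) : ℂ) = inner ℂ (R ψ) ((χ : H1)))
    (hess : ∀ σ : ℂ, σ = Complex.I ∨ σ = -Complex.I →
      ∀ ψ : H1, (∀ φ : D, (inner ℂ ψ (R φ + σ • (φ : H1)) : ℂ) = 0) → ψ = 0) :
    ∀ σ : ℂ, σ = Complex.I ∨ σ = -Complex.I →
      ∀ Ψ : H, (∀ (i : ι) (φ : D),
          (inner ℂ Ψ (t (R φ + σ • (φ : H1)) (Γ i)) : ℂ) = 0) → Ψ = 0 := by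
  intro σ hσ Ψ hΨ
  -- norm identity
  have htnorm : ∀ (a : H1) (b : H2), ‖t a b‖ = ‖a‖ * ‖b‖ := by
    intro a b
    have h1 := ht a a b b
    rw [inner_self_eq_norm_sq_to_K, inner_self_eq_norm_sq_to_K,
        inner_self_eq_norm_sq_to_K] at h1
    have h3 : ‖t a b‖ ^ 2 = ‖a‖ ^ 2 * ‖b‖ ^ 2 := by exact_mod_cast h1
    nlinarith [norm_nonneg (t a b), norm_nonneg a, norm_nonneg b,
      mul_nonneg (norm_nonneg a) (norm_nonneg b)]
  -- Step 1: Ψ ⊥ t a (Γ i) for all a, i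
  have step1 : ∀ (i : ι) (a : H1), (inner ℂ Ψ (t a (Γ i)) : ℂ) = 0 := by
    intro i
    have hΓi : ‖Γ i‖ = 1 := hΓ.1 i
    set g : H1 →ₗ[ℂ] ℂ :=
      (innerSL ℂ Ψ).toLinearMap.comp (t.flip (Γ i)) with hg
    have hbound : ∀ a : H1, ‖g a‖ ≤ ‖Ψ‖ * ‖a‖ := by
      intro a
      have : ‖g a‖ = ‖(inner ℂ Ψ (t a (Γ i)) : ℂ)‖ := rfl
      rw [this]
      calc ‖(inner ℂ Ψ (t a (Γ i)) : ℂ)‖ ≤ ‖Ψ‖ * ‖t a (Γ i)‖ := norm_inner_le_norm _ _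
        _ = ‖Ψ‖ * ‖a‖ := by rw [htnorm, hΓi, mul_one]
    set f : H1 →L[ℂ] ℂ := g.mkContinuous ‖Ψ‖ hbound with hf
    set ψ : H1 := (InnerProductSpace.toDual ℂ H1).symm f with hψ
    have hψa : ∀ a : H1, (inner ℂ ψ a : ℂ) = f a := fun a =>
      InnerProductSpace.toDual_symm_apply
    have hψ0 : ψ = 0 := by
      apply hess σ hσ
      intro φ
      rw [hψa]
      exact hΨ i φ
    have hf0 : f = 0 := by
      have : f = InnerProductSpace.toDual ℂ H1 ψ := by
        rw [hψ, LinearIsometryEquiv.apply_symm_apply]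
      rw [this, hψ0, map_zero]
    intro a
    have : f a = 0 := by rw [hf0]; rfl
    exact this
  -- Step 2: Ψ ⊥ t a b for all a b
  have step2 : ∀ (a : H1) (b : H2), (inner ℂ Ψ (t a b) : ℂ) = 0 := by
    intro a
    set g : H2 →ₗ[ℂ] ℂ := (innerSL ℂ Ψ).toLinearMap.comp (t a) with hg
    have hbound : ∀ b : H2, ‖g b‖ ≤ (‖Ψ‖ * ‖a‖) * ‖b‖ := by
      intro b
      have : ‖g b‖ = ‖(inner ℂ Ψ (t a b) : ℂ)‖ := rfl
      rw [this]
      calc ‖(inner ℂ Ψ (t a b) : ℂ)‖ ≤ ‖Ψ‖ * ‖t a b‖ := norm_inner_le_norm _ _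
        _ = (‖Ψ‖ * ‖a‖) * ‖b‖ := by rw [htnorm]; ring
    set f : H2 →L[ℂ] ℂ := g.mkContinuous _ hbound with hf
    have h0 : ∀ b, f b = 0 := by
      apply dense_span_zero' f (Set.range Γ) hΓbasis
      rintro x ⟨i, rfl⟩
      exact step1 i a
    intro b
    exact h0 b
  -- Step 3: Ψ = 0
  have h0 : ∀ x, innerSL ℂ Ψ x = 0 := by
    apply dense_span_zero' (innerSL ℂ Ψ) _ htdense
    rintro x ⟨a, b, rfl⟩
    exact step2 a b
  have := h0 Ψ
  simpa [inner_self_eq_zero] using this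
end
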